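/- For q ∈ (0,1) and ν, μ with 0 < ν < μ < 1, and any θ > 0, the function x ↦ (Ψ_q''(θ+x) - Ψ_q''(θ+log_q ν))/(Ψ_q'(θ+x) - Ψ_q'(θ+log_q ν)) is strictly increasing on (0, log_q ν), given that θ ↦ Ψ_q'''(θ)/Ψ_q''(θ) is increasing, Ψ_q' is strictly decreasing, and Ψ_q'' < 0 on (0,∞). -/

import Mathlib

open Real

/-- Infinite q-Pochhammer symbol (x;q)_∞ = ∏_{j=0}^∞ (1 - x q^j). -/
noncomputable def qPochInf (x q : ℝ) : ℝ := ∏' j : ℕ, (1 - x * q ^ j)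

/-- The q-gamma function Γ_q(z) = (1-q)^{1-z} (q;q)_∞ / (q^z;q)_∞. -/
noncomputable def qGamma (q z : ℝ) : ℝ :=
  (1 - q) ^ (1 - z) * qPochInf q q / qPochInf (q ^ z) q

/-- The q-digamma function Ψ_q(Z) = d/dZ log Γ_q(Z). -/
noncomputable def qDigamma (q Z : ℝ) : ℝ := deriv (fun z => Real.log (qGamma q z)) Z


section aux
variable {q : ℝ}

lemma lq_neg (hq0 : 0 < q) (hq1 : q < 1) : Real.log q < 0 := Real.log_neg hq0 hq1

lemma pow_succ_lt_one (hq0 : 0 < q) (hq1 : q < 1) (n : ℕ) : q ^ (n+1) < 1 :=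
  pow_lt_one₀ hq0.le hq1 (Nat.succ_ne_zero n)

lemma one_sub_pow_pos (hq0 : 0 < q) (hq1 : q < 1) (n : ℕ) : 0 < 1 - q ^ (n+1) :=
  sub_pos.2 (pow_succ_lt_one hq0 hq1 n)

lemma one_sub_pow_ge (hq0 : 0 < q) (hq1 : q < 1) (n : ℕ) : 1 - q ≤ 1 - q ^ (n+1) := by
  have : q ^ (n+1) ≤ q := by
    calc q ^ (n+1) ≤ q ^ 1 := pow_le_pow_of_le_one hq0.le hq1.le (by omega)
    _ = q := pow_one q
  linarith

/-- summability of the basic series -/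
lemma summable_aux (hq0 : 0 < q) (hq1 : q < 1) {c : ℕ → ℝ} {K : ℝ} {m : ℕ}
    (hc : ∀ n, |c n| ≤ K * ((n:ℝ)+1)^m) {z : ℝ} (hz : 0 < z) :
    Summable (fun n : ℕ => c n * Real.exp ((((n:ℝ)+1) * Real.log q) * z)) := by
  set r : ℝ := Real.exp (Real.log q * z) with hrdef
  have hr0 : 0 < r := Real.exp_pos _
  have hr1 : r < 1 := by
    rw [hrdef, Real.exp_lt_one_iff]
    exact mul_neg_of_neg_of_pos (lq_neg hq0 hq1) hz
  have hexp : ∀ n : ℕ, Real.exp ((((n:ℝ)+1) * Real.log q) * z) = r ^ (n+1) := by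
    intro n
    rw [hrdef, ← Real.exp_nat_mul]
    congr 1
    push_cast
    ring
  have hmaj : Summable (fun n : ℕ => K * (((n:ℝ)+1)^m * r^(n+1))) := by
    apply Summable.mul_left
    have := (summable_pow_mul_geometric_of_norm_lt_one m
      (r := r) (by rwa [Real.norm_eq_abs, abs_of_pos hr0])).comp_injective Nat.succ_injective
    refine this.congr fun n => ?_
    simp only [Function.comp]
    push_cast
    rw [pow_succ]
  refine Summable.of_norm_bounded hmaj fun n => ?_
  rw [norm_mul, hexp, Real.norm_eq_abs, Real.norm_eq_abs, abs_of_pos (pow_pos hr0 _)]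
  have h1 := hc n
  have h2 : (0:ℝ) < r ^ (n+1) := pow_pos hr0 _
  nlinarith [abs_nonneg (c n)]


/-- termwise differentiation of the basic series -/
lemma hasDerivAt_aux (hq0 : 0 < q) (hq1 : q < 1) {c : ℕ → ℝ} {K : ℝ} {m : ℕ}
    (hc : ∀ n, |c n| ≤ K * ((n:ℝ)+1)^m) {z : ℝ} (hz : 0 < z) :
    HasDerivAt (fun y => ∑' n : ℕ, c n * Real.exp ((((n:ℝ)+1) * Real.log q) * y))
      (∑' n : ℕ, (c n * (((n:ℝ)+1) * Real.log q)) * Real.exp ((((n:ℝ)+1) * Real.log q) * z))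
      z := by
  have hlq : Real.log q < 0 := lq_neg hq0 hq1
  set r : ℝ := Real.exp (Real.log q * (z/2)) with hrdef
  have hr0 : 0 < r := Real.exp_pos _
  have hr1 : r < 1 := by
    rw [hrdef, Real.exp_lt_one_iff]
    exact mul_neg_of_neg_of_pos hlq (by linarith)
  have hKnn : 0 ≤ K := by
    have h := hc 0
    simp at h
    linarith [abs_nonneg (c 0)]
  refine hasDerivAt_tsum_of_isPreconnected
    (u := fun n : ℕ => (K * |Real.log q|) * ((((n:ℝ)+1)^(m+1)) * r^(n+1)))
    (t := Set.Ioi (z/2)) (y₀ := z)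
    (g := fun (n : ℕ) (y : ℝ) => c n * Real.exp ((((n:ℝ)+1) * Real.log q) * y))
    (g' := fun (n : ℕ) (y : ℝ) => (c n * (((n:ℝ)+1) * Real.log q))
      * Real.exp ((((n:ℝ)+1) * Real.log q) * y))
    ?_ isOpen_Ioi (convex_Ioi _).isPreconnected
    ?_ ?_ ?_ ?_ ?_
  · -- summability of u
    apply Summable.mul_left
    have := (summable_pow_mul_geometric_of_norm_lt_one (m+1)
      (r := r) (by rwa [Real.norm_eq_abs, abs_of_pos hr0])).comp_injective Nat.succ_injective
    refine this.congr fun n => ?_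
    simp only [Function.comp]
    push_cast
    rw [pow_succ]
  · -- HasDerivAt of each term
    intro n y _
    have h1 : HasDerivAt (fun y : ℝ => (((n:ℝ)+1) * Real.log q) * y)
        (((n:ℝ)+1) * Real.log q) y := by
      simpa using (hasDerivAt_id y).const_mul (((n:ℝ)+1) * Real.log q)
    have h2 := (h1.exp).const_mul (c n)
    refine h2.congr_deriv ?_
    ring
  · -- bound
    intro n y hy
    have hyz : z/2 ≤ y := le_of_lt hy
    have hle : Real.exp ((((n:ℝ)+1) * Real.log q) * y) ≤ r ^ (n+1) := by
      have : Real.exp ((((n:ℝ)+1) * Real.log q) * y)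
          ≤ Real.exp ((((n:ℝ)+1) * Real.log q) * (z/2)) := by
        apply Real.exp_le_exp.2
        have hn1 : (0:ℝ) < (n:ℝ)+1 := by positivity
        have hnl : ((n:ℝ)+1) * Real.log q ≤ 0 :=
          mul_nonpos_of_nonneg_of_nonpos hn1.le hlq.le
        nlinarith [mul_nonneg (neg_nonneg.2 hnl) (sub_nonneg.2 hyz)]
      refine this.trans_eq ?_
      rw [hrdef, ← Real.exp_nat_mul]
      congr 1
      push_cast
      ring
    rw [Real.norm_eq_abs, abs_mul, abs_mul, abs_exp]
    have h1 := hc n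
    have hn1 : (0:ℝ) < ((n:ℝ)+1) := by positivity
    have habs : |((n:ℝ)+1) * Real.log q| = (((n:ℝ)+1)) * |Real.log q| := by
      rw [abs_mul, abs_of_pos hn1]
    rw [habs]
    have hexp_pos : 0 < Real.exp ((((n:ℝ)+1) * Real.log q) * y) := Real.exp_pos _
    have hrp : (0:ℝ) < r^(n+1) := pow_pos hr0 _
    have hcb : |c n| * (((n:ℝ)+1) * |Real.log q|) ≤ (K * |Real.log q|) * ((n:ℝ)+1)^(m+1) := by
      have := abs_nonneg (Real.log q)
      have hpow : ((n:ℝ)+1)^(m+1) = ((n:ℝ)+1)^m * ((n:ℝ)+1) := pow_succ _ _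
      rw [hpow]
      nlinarith [mul_le_mul_of_nonneg_right h1 (mul_nonneg hn1.le this)]
    calc |c n| * (((n:ℝ)+1) * |Real.log q|) * Real.exp ((((n:ℝ)+1) * Real.log q) * y)
        ≤ ((K * |Real.log q|) * ((n:ℝ)+1)^(m+1)) * (r^(n+1)) := by
          apply mul_le_mul hcb hle hexp_pos.le
          positivity
      _ = (K * |Real.log q|) * ((((n:ℝ)+1)^(m+1)) * r^(n+1)) := by ring
  · -- y₀ ∈ t
    simp only [Set.mem_Ioi]; linarith
  · exact summable_aux hq0 hq1 hc hz
  · simp only [Set.mem_Ioi]; linarith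


/-- The auxiliary series `Φ_m(z) = ∑ (n+1)^m q^{(n+1)z}/(1-q^{n+1})`. -/
noncomputable def phiF (q : ℝ) (m : ℕ) (z : ℝ) : ℝ :=
  ∑' n : ℕ, ((((n:ℝ)+1)^m / (1 - q^(n+1))) * Real.exp ((((n:ℝ)+1) * Real.log q) * z))

/-- The auxiliary series `P(z) = ∑ q^{(n+1)z}/((n+1)(1-q^{n+1}))`. -/
noncomputable def pF (q : ℝ) (z : ℝ) : ℝ :=
  ∑' n : ℕ, ((1 / (((n:ℝ)+1) * (1 - q^(n+1)))) * Real.exp ((((n:ℝ)+1) * Real.log q) * z))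

lemma coef_bound_phi (hq0 : 0 < q) (hq1 : q < 1) (m : ℕ) (n : ℕ) :
    |(((n:ℝ)+1)^m / (1 - q^(n+1)))| ≤ (1/(1-q)) * ((n:ℝ)+1)^m := by
  have h1 := one_sub_pow_pos hq0 hq1 n
  have h2 := one_sub_pow_ge hq0 hq1 n
  have hn1 : (0:ℝ) < ((n:ℝ)+1)^m := by positivity
  have hq : (0:ℝ) < 1 - q := by linarith
  rw [abs_div, abs_of_pos hn1, abs_of_pos h1, one_div, inv_mul_eq_div]
  gcongr

lemma coef_bound_p (hq0 : 0 < q) (hq1 : q < 1) (n : ℕ) :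
    |(1 / (((n:ℝ)+1) * (1 - q^(n+1))))| ≤ (1/(1-q)) * ((n:ℝ)+1)^0 := by
  have h1 := one_sub_pow_pos hq0 hq1 n
  have h2 := one_sub_pow_ge hq0 hq1 n
  have hn0 : (0:ℝ) ≤ (n:ℝ) := Nat.cast_nonneg n
  have hn1 : (1:ℝ) ≤ (n:ℝ)+1 := by linarith
  have hq : (0:ℝ) < 1 - q := by linarith
  have hpos : (0:ℝ) < ((n:ℝ)+1) * (1 - q^(n+1)) := by positivity
  rw [pow_zero, mul_one, abs_of_pos (by positivity), div_le_div_iff₀ hpos hq]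
  nlinarith

lemma summable_phi (hq0 : 0 < q) (hq1 : q < 1) (m : ℕ) {z : ℝ} (hz : 0 < z) :
    Summable (fun n : ℕ =>
      (((n:ℝ)+1)^m / (1 - q^(n+1))) * Real.exp ((((n:ℝ)+1) * Real.log q) * z)) :=
  summable_aux hq0 hq1 (coef_bound_phi hq0 hq1 m) hz

lemma phi_pos (hq0 : 0 < q) (hq1 : q < 1) (m : ℕ) {z : ℝ} (hz : 0 < z) :
    0 < phiF q m z := by
  refine Summable.tsum_pos (summable_phi hq0 hq1 m hz) (fun n => ?_) 0 ?_
  · have := one_sub_pow_pos hq0 hq1 n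
    positivity
  · have := one_sub_pow_pos hq0 hq1 0
    positivity

lemma hasDerivAt_phi (hq0 : 0 < q) (hq1 : q < 1) (m : ℕ) {z : ℝ} (hz : 0 < z) :
    HasDerivAt (phiF q m) (Real.log q * phiF q (m+1) z) z := by
  have h := hasDerivAt_aux hq0 hq1 (coef_bound_phi hq0 hq1 m) hz
  refine h.congr_deriv ?_
  rw [phiF, ← tsum_mul_left]
  refine tsum_congr fun n => ?_
  rw [pow_succ]
  have := (one_sub_pow_pos hq0 hq1 n).ne'
  field_simp
  ring

lemma hasDerivAt_p (hq0 : 0 < q) (hq1 : q < 1) {z : ℝ} (hz : 0 < z) :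
    HasDerivAt (pF q) (Real.log q * phiF q 0 z) z := by
  have h := hasDerivAt_aux hq0 hq1 (coef_bound_p hq0 hq1) hz
  refine h.congr_deriv ?_
  rw [phiF, ← tsum_mul_left]
  refine tsum_congr fun n => ?_
  have h1 := (one_sub_pow_pos hq0 hq1 n).ne'
  have h2 : ((n:ℝ)+1) ≠ 0 := by positivity
  rw [pow_zero]
  field_simp


set_option maxHeartbeats 2000000 in
lemma hasSum_log_poch (hq0 : 0 < q) (hq1 : q < 1) {z : ℝ} (hz : 0 < z) :
    HasSum (fun j : ℕ => Real.log (1 - q ^ (z:ℝ) * q ^ j)) (-(pF q z)) := by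
  have hlq := lq_neg hq0 hq1
  set t : ℝ := q ^ (z:ℝ) with ht
  have ht0 : 0 < t := Real.rpow_pos_of_pos hq0 _
  have ht1 : t < 1 := Real.rpow_lt_one hq0.le hq1 hz
  have htq : ∀ j : ℕ, 0 < t * q ^ j ∧ t * q ^ j < 1 := by
    intro j
    have h1 : (0:ℝ) < q ^ j := pow_pos hq0 _
    have h2 : q ^ j ≤ 1 := pow_le_one₀ hq0.le hq1.le
    constructor
    · positivity
    · nlinarith
  set F : ℕ × ℕ → ℝ := fun p => (t * q ^ p.1) ^ (p.2 + 1) / ((p.2:ℝ) + 1) with hF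
  have hFnn : ∀ p : ℕ × ℕ, 0 ≤ F p := by
    intro p
    have := (htq p.1).1
    positivity
  have hFsum : Summable F := by
    have hmaj : Summable (fun p : ℕ × ℕ => q ^ p.1 * t ^ (p.2+1)) := by
      apply summable_mul_of_summable_norm (f := fun j : ℕ => q ^ j)
        (g := fun k : ℕ => t ^ (k+1))
      · simp only [norm_pow, Real.norm_eq_abs, abs_of_pos hq0]
        exact summable_geometric_of_lt_one hq0.le hq1
      · simp only [norm_pow, Real.norm_eq_abs, abs_of_pos ht0]
        exact (summable_geometric_of_lt_one ht0.le ht1).comp_injective Nat.succ_injective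
    refine Summable.of_nonneg_of_le hFnn (fun p => ?_) hmaj
    obtain ⟨j, k⟩ := p
    have h1 : (0:ℝ) < q ^ j := pow_pos hq0 _
    have hk1 : (1:ℝ) ≤ (k:ℝ) + 1 := by
      have := Nat.cast_nonneg (α := ℝ) k; linarith
    have key : (t * q ^ j) ^ (k+1) ≤ q ^ j * t ^ (k+1) := by
      rw [mul_pow]
      have h2 : (q ^ j) ^ (k+1) ≤ q ^ j := by
        calc (q ^ j) ^ (k+1) ≤ (q ^ j) ^ 1 :=
          pow_le_pow_of_le_one (by positivity) (pow_le_one₀ hq0.le hq1.le) (by omega)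
        _ = q ^ j := pow_one _
      have h3 : (0:ℝ) ≤ t ^ (k+1) := by positivity
      nlinarith
    calc F (j, k) ≤ (t * q ^ j) ^ (k+1) :=
          div_le_self (pow_nonneg (le_of_lt (htq j).1) _) hk1
      _ ≤ q ^ j * t ^ (k+1) := key
  -- fiberwise in k : log series
  have hinner : ∀ j : ℕ, HasSum (fun k : ℕ => F (j, k)) (-Real.log (1 - t * q ^ j)) := by
    intro j
    have habs : |t * q ^ j| < 1 := by
      rw [abs_of_pos (htq j).1]; exact (htq j).2
    exact Real.hasSum_pow_div_log_of_abs_lt_one habs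
  have hS : HasSum (fun j : ℕ => -Real.log (1 - t * q ^ j)) (∑' p, F p) :=
    hFsum.hasSum.prod_fiberwise hinner
  -- fiberwise in j : geometric series
  have hswap : HasSum (fun p : ℕ × ℕ => F (p.2, p.1)) (∑' p, F p) := by
    exact ((Equiv.prodComm ℕ ℕ).hasSum_iff).2 hFsum.hasSum
  have hinner2 : ∀ k : ℕ, HasSum (fun j : ℕ => F (j, k))
      ((1 / (((k:ℝ)+1) * (1 - q^(k+1)))) * Real.exp ((((k:ℝ)+1) * Real.log q) * z)) := by
    intro k
    have hgeo : HasSum (fun j : ℕ => (q^(k+1))^j) (1 - q^(k+1))⁻¹ :=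
      hasSum_geometric_of_lt_one (by positivity) (pow_succ_lt_one hq0 hq1 k)
    have h := hgeo.mul_left (t^(k+1) / ((k:ℝ)+1))
    have hfun : ∀ j : ℕ, t^(k+1) / ((k:ℝ)+1) * (q^(k+1))^j = F (j, k) := by
      intro j
      simp only [hF]
      rw [mul_pow, ← pow_mul, ← pow_mul, Nat.mul_comm j (k+1)]
      ring
    rw [show (fun j : ℕ => t^(k+1) / ((k:ℝ)+1) * (q^(k+1))^j) = fun j => F (j, k) from
      funext hfun] at h
    rw [show ((1 / (((k:ℝ)+1) * (1 - q^(k+1)))) * Real.exp ((((k:ℝ)+1) * Real.log q) * z))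
      = t ^ (k + 1) / ((k:ℝ) + 1) * (1 - q ^ (k + 1))⁻¹ from ?_]
    · exact h
    have htpow : t^(k+1) = Real.exp ((((k:ℝ)+1) * Real.log q) * z) := by
      rw [ht, Real.rpow_def_of_pos hq0, ← Real.exp_nat_mul]
      congr 1
      push_cast
      ring
    rw [← htpow]
    have h1 := (one_sub_pow_pos hq0 hq1 k).ne'
    have h2 : ((k:ℝ)+1) ≠ 0 := by positivity
    field_simp
  have hK : HasSum (fun k : ℕ =>
      (1 / (((k:ℝ)+1) * (1 - q^(k+1)))) * Real.exp ((((k:ℝ)+1) * Real.log q) * z))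
      (∑' p, F p) := hswap.prod_fiberwise hinner2
  have hpF : pF q z = ∑' p, F p := hK.tsum_eq
  have := hS.neg
  simp only [neg_neg] at this
  rw [← hpF] at this
  exact this

lemma qPochInf_eq (hq0 : 0 < q) (hq1 : q < 1) {z : ℝ} (hz : 0 < z) :
    qPochInf (q ^ (z:ℝ)) q = Real.exp (-(pF q z)) := by
  have h := (hasSum_log_poch hq0 hq1 hz).rexp
  have hfun : (Real.exp ∘ fun j : ℕ => Real.log (1 - q ^ (z:ℝ) * q ^ j))
      = fun j : ℕ => 1 - q ^ (z:ℝ) * q ^ j := by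
    funext j
    have h1 : (0:ℝ) < q ^ j := pow_pos hq0 _
    have h2 : q ^ j ≤ 1 := pow_le_one₀ hq0.le hq1.le
    have ht0 : 0 < q ^ (z:ℝ) := Real.rpow_pos_of_pos hq0 _
    have ht1 : q ^ (z:ℝ) < 1 := Real.rpow_lt_one hq0.le hq1 hz
    have : 0 < 1 - q ^ (z:ℝ) * q ^ j := by nlinarith
    simp [Real.exp_log this]
  rw [hfun] at h
  exact h.tprod_eq

lemma qPochInf_q_eq (hq0 : 0 < q) (hq1 : q < 1) :
    qPochInf q q = Real.exp (-(pF q 1)) := by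
  have := qPochInf_eq hq0 hq1 (z := 1) one_pos
  rwa [Real.rpow_one] at this

lemma log_qGamma_eq (hq0 : 0 < q) (hq1 : q < 1) {z : ℝ} (hz : 0 < z) :
    Real.log (qGamma q z) = (1-z) * Real.log (1-q) - pF q 1 + pF q z := by
  have hq : (0:ℝ) < 1 - q := by linarith
  rw [qGamma, qPochInf_eq hq0 hq1 hz, qPochInf_q_eq hq0 hq1]
  rw [Real.log_div (by positivity) (Real.exp_ne_zero _),
    Real.log_mul (by positivity) (Real.exp_ne_zero _),
    Real.log_rpow hq, Real.log_exp, Real.log_exp]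
  ring


lemma eventually_Ioi {f g : ℝ → ℝ} (h : ∀ y ∈ Set.Ioi (0:ℝ), f y = g y) {z : ℝ}
    (hz : 0 < z) : f =ᶠ[nhds z] g :=
  Filter.eventually_of_mem (isOpen_Ioi.mem_nhds hz) h

lemma qDigamma_eq (hq0 : 0 < q) (hq1 : q < 1) {z : ℝ} (hz : 0 < z) :
    qDigamma q z = -Real.log (1-q) + Real.log q * phiF q 0 z := by
  have hev : (fun y => Real.log (qGamma q y)) =ᶠ[nhds z]
      (fun y => (1-y) * Real.log (1-q) - pF q 1 + pF q y) :=
    eventually_Ioi (fun y hy => log_qGamma_eq hq0 hq1 hy) hz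
  have hd : HasDerivAt (fun y => (1-y) * Real.log (1-q) - pF q 1 + pF q y)
      (-Real.log (1-q) + Real.log q * phiF q 0 z) z := by
    have h1 : HasDerivAt (fun y : ℝ => (1-y) * Real.log (1-q)) (-Real.log (1-q)) z := by
      have := ((hasDerivAt_const z (1:ℝ)).sub (hasDerivAt_id z)).mul_const (Real.log (1-q))
      simpa using this
    have h2 := hasDerivAt_p hq0 hq1 hz
    exact (h1.sub_const (pF q 1)).add h2
  rw [qDigamma, hev.deriv_eq, hd.deriv]

lemma hasDerivAt_qDigamma (hq0 : 0 < q) (hq1 : q < 1) {z : ℝ} (hz : 0 < z) :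
    HasDerivAt (qDigamma q) (Real.log q ^ 2 * phiF q 1 z) z := by
  have hd : HasDerivAt (fun y => -Real.log (1-q) + Real.log q * phiF q 0 y)
      (Real.log q ^ 2 * phiF q 1 z) z := by
    have := ((hasDerivAt_phi hq0 hq1 0 hz).const_mul (Real.log q)).const_add
      (-Real.log (1-q))
    refine this.congr_deriv ?_
    ring
  exact hd.congr_of_eventuallyEq
    (eventually_Ioi (fun y hy => qDigamma_eq hq0 hq1 hy) hz)

lemma psi1_eq (hq0 : 0 < q) (hq1 : q < 1) {z : ℝ} (hz : 0 < z) :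
    deriv (qDigamma q) z = Real.log q ^ 2 * phiF q 1 z :=
  (hasDerivAt_qDigamma hq0 hq1 hz).deriv

lemma hasDerivAt_psi1 (hq0 : 0 < q) (hq1 : q < 1) {z : ℝ} (hz : 0 < z) :
    HasDerivAt (deriv (qDigamma q)) (Real.log q ^ 3 * phiF q 2 z) z := by
  have hd : HasDerivAt (fun y => Real.log q ^ 2 * phiF q 1 y)
      (Real.log q ^ 3 * phiF q 2 z) z := by
    have := (hasDerivAt_phi hq0 hq1 1 hz).const_mul (Real.log q ^ 2)
    refine this.congr_deriv ?_
    ring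
  exact hd.congr_of_eventuallyEq
    (eventually_Ioi (fun y hy => psi1_eq hq0 hq1 hy) hz)

lemma psi2_eq (hq0 : 0 < q) (hq1 : q < 1) {z : ℝ} (hz : 0 < z) :
    deriv (deriv (qDigamma q)) z = Real.log q ^ 3 * phiF q 2 z :=
  (hasDerivAt_psi1 hq0 hq1 hz).deriv

lemma hasDerivAt_psi2 (hq0 : 0 < q) (hq1 : q < 1) {z : ℝ} (hz : 0 < z) :
    HasDerivAt (deriv (deriv (qDigamma q))) (Real.log q ^ 4 * phiF q 3 z) z := by
  have hd : HasDerivAt (fun y => Real.log q ^ 3 * phiF q 2 y)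
      (Real.log q ^ 4 * phiF q 3 z) z := by
    have := (hasDerivAt_phi hq0 hq1 2 hz).const_mul (Real.log q ^ 3)
    refine this.congr_deriv ?_
    ring
  exact hd.congr_of_eventuallyEq
    (eventually_Ioi (fun y hy => psi2_eq hq0 hq1 hy) hz)

lemma psi3_eq (hq0 : 0 < q) (hq1 : q < 1) {z : ℝ} (hz : 0 < z) :
    deriv (deriv (deriv (qDigamma q))) z = Real.log q ^ 4 * phiF q 3 z :=
  (hasDerivAt_psi2 hq0 hq1 hz).deriv

lemma hasDerivAt_psi3 (hq0 : 0 < q) (hq1 : q < 1) {z : ℝ} (hz : 0 < z) :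
    HasDerivAt (deriv (deriv (deriv (qDigamma q)))) (Real.log q ^ 5 * phiF q 4 z) z := by
  have hd : HasDerivAt (fun y => Real.log q ^ 4 * phiF q 3 y)
      (Real.log q ^ 5 * phiF q 4 z) z := by
    have := (hasDerivAt_phi hq0 hq1 3 hz).const_mul (Real.log q ^ 4)
    refine this.congr_deriv ?_
    ring
  exact hd.congr_of_eventuallyEq
    (eventually_Ioi (fun y hy => psi3_eq hq0 hq1 hy) hz)


/-- strict Cauchy–Schwarz for the series: Φ₂Φ₄ > Φ₃². -/
lemma phi_cs (hq0 : 0 < q) (hq1 : q < 1) {z : ℝ} (hz : 0 < z) :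
    phiF q 3 z ^ 2 < phiF q 2 z * phiF q 4 z := by
  set t : ℝ := phiF q 3 z / phiF q 2 z with htdef
  set a : ℕ → ℝ := fun n => (1 / (1 - q^(n+1))) * Real.exp ((((n:ℝ)+1) * Real.log q) * z)
    with ha
  have hapos : ∀ n, 0 < a n := by
    intro n
    have := one_sub_pow_pos hq0 hq1 n
    rw [ha]
    positivity
  have hterm : ∀ (m : ℕ) (n : ℕ),
      (((n:ℝ)+1)^m / (1 - q^(n+1))) * Real.exp ((((n:ℝ)+1) * Real.log q) * z)
        = ((n:ℝ)+1)^m * a n := by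
    intro m n
    rw [ha]
    ring
  have hsum : ∀ m : ℕ, Summable (fun n : ℕ => ((n:ℝ)+1)^m * a n) := by
    intro m
    refine (summable_phi hq0 hq1 m hz).congr fun n => hterm m n
  have hphi : ∀ m : ℕ, phiF q m z = ∑' n : ℕ, ((n:ℝ)+1)^m * a n := by
    intro m
    exact tsum_congr fun n => hterm m n
  -- the quadratic-form series
  have hQsum : Summable (fun n : ℕ =>
      (((n:ℝ)+1)^2 * (((n:ℝ)+1) - t)^2) * a n) := by
    refine Summable.congr (((hsum 4).add (((hsum 3).mul_left (-2*t)).add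
      ((hsum 2).mul_left (t^2)))) ) fun n => ?_
    ring
  have hQeq : (∑' n : ℕ, (((n:ℝ)+1)^2 * (((n:ℝ)+1) - t)^2) * a n)
      = phiF q 4 z + ((-2*t) * phiF q 3 z + t^2 * phiF q 2 z) := by
    rw [hphi 4, hphi 3, hphi 2, ← tsum_mul_left, ← tsum_mul_left,
      ← Summable.tsum_add ((hsum 3).mul_left (-2*t)) ((hsum 2).mul_left (t^2)),
      ← Summable.tsum_add (hsum 4) (((hsum 3).mul_left (-2*t)).add ((hsum 2).mul_left (t^2)))]
    exact tsum_congr fun n => by ring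
  have hQpos : 0 < ∑' n : ℕ, (((n:ℝ)+1)^2 * (((n:ℝ)+1) - t)^2) * a n := by
    have hnn : ∀ n : ℕ, 0 ≤ (((n:ℝ)+1)^2 * (((n:ℝ)+1) - t)^2) * a n := by
      intro n
      have := (hapos n).le
      positivity
    by_cases ht : t = 1
    · refine Summable.tsum_pos hQsum hnn 1 ?_
      have := hapos 1
      rw [ht]
      norm_num
      positivity
    · refine Summable.tsum_pos hQsum hnn 0 ?_
      have h1 : ((0:ℕ):ℝ) + 1 - t ≠ 0 := by
        simp only [Nat.cast_zero, zero_add]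
        intro h
        exact ht (by linarith)
      have := hapos 0
      have h2 : (0:ℝ) < (((0:ℕ):ℝ)+1 - t)^2 := by positivity
      have h3 : (0:ℝ) < (((0:ℕ):ℝ)+1)^2 := by positivity
      positivity
  rw [hQeq] at hQpos
  have h2pos := phi_pos hq0 hq1 2 hz
  have ht2 : t * phiF q 2 z = phiF q 3 z := div_mul_cancel₀ _ h2pos.ne'
  nlinarith [mul_pos hQpos h2pos]

/-- the ratio Ψ₃/Ψ₂ is strictly increasing on `(0,∞)`. -/
lemma ratio_strictMono (hq0 : 0 < q) (hq1 : q < 1) :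
    StrictMonoOn (fun z => deriv (deriv (deriv (qDigamma q))) z
      / deriv (deriv (qDigamma q)) z) (Set.Ioi (0:ℝ)) := by
  have hlq := lq_neg hq0 hq1
  have hpsi2_ne : ∀ z : ℝ, 0 < z → deriv (deriv (qDigamma q)) z ≠ 0 := by
    intro z hz
    rw [psi2_eq hq0 hq1 hz]
    have h1 := phi_pos hq0 hq1 2 hz
    have h2 : Real.log q ^ 3 < 0 := by
      exact odd_two_mul_add_one 1 |>.pow_neg hlq
    exact (mul_neg_of_neg_of_pos h2 h1).ne
  have hd : ∀ z ∈ Set.Ioi (0:ℝ), HasDerivAt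
      (fun y => deriv (deriv (deriv (qDigamma q))) y / deriv (deriv (qDigamma q)) y)
      ((Real.log q ^ 5 * phiF q 4 z * deriv (deriv (qDigamma q)) z
        - deriv (deriv (deriv (qDigamma q))) z * (Real.log q ^ 4 * phiF q 3 z))
        / (deriv (deriv (qDigamma q)) z) ^ 2) z := by
    intro z hz
    rw [Set.mem_Ioi] at hz
    exact (hasDerivAt_psi3 hq0 hq1 hz).div (hasDerivAt_psi2 hq0 hq1 hz) (hpsi2_ne z hz)
  refine strictMonoOn_of_deriv_pos (convex_Ioi 0) ?_ ?_
  · intro z hz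
    exact ((hd z hz).continuousAt).continuousWithinAt
  · intro z hz
    rw [interior_Ioi] at hz
    rw [(hd z hz).deriv]
    rw [Set.mem_Ioi] at hz
    rw [psi2_eq hq0 hq1 hz, psi3_eq hq0 hq1 hz]
    have hcs := phi_cs hq0 hq1 hz
    have h2 := phi_pos hq0 hq1 2 hz
    have h3 := phi_pos hq0 hq1 3 hz
    have h4 := phi_pos hq0 hq1 4 hz
    have hnum : Real.log q ^ 5 * phiF q 4 z * (Real.log q ^ 3 * phiF q 2 z)
        - Real.log q ^ 4 * phiF q 3 z * (Real.log q ^ 4 * phiF q 3 z)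
        = Real.log q ^ 8 * (phiF q 2 z * phiF q 4 z - phiF q 3 z ^ 2) := by
      ring
    rw [hnum]
    have hlqne : Real.log q ≠ 0 := hlq.ne
    have hlq8 : 0 < Real.log q ^ 8 := by positivity
    have hden : 0 < (Real.log q ^ 3 * phiF q 2 z) ^ 2 := by
      have := hpsi2_ne z hz
      rw [psi2_eq hq0 hq1 hz] at this
      positivity
    apply div_pos _ hden
    apply mul_pos hlq8
    linarith



end aux

/-- With Ψ₁ = Ψ_q', Ψ₂ = Ψ_q'', Ψ₃ = Ψ_q''', and given that z ↦ Ψ₃(z)/Ψ₂(z) is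
increasing, Ψ₁ is strictly decreasing, and Ψ₂ < 0 on (0,∞), the function
x ↦ (Ψ₂(θ+x) - Ψ₂(θ+log_q ν))/(Ψ₁(θ+x) - Ψ₁(θ+log_q ν)) is strictly increasing
on (0, log_q ν). -/
theorem stmt_18 (q ν μ θ : ℝ) (hq0 : 0 < q) (hq1 : q < 1) (hν0 : 0 < ν) (hνμ : ν < μ)
    (hμ1 : μ < 1) (hθ : 0 < θ)
    (hratio : MonotoneOn
      (fun z => deriv (deriv (deriv (qDigamma q))) z / deriv (deriv (qDigamma q)) z)
      (Set.Ioi (0 : ℝ)))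
    (hanti : StrictAntiOn (deriv (qDigamma q)) (Set.Ioi (0 : ℝ)))
    (hneg : ∀ z ∈ Set.Ioi (0 : ℝ), deriv (deriv (qDigamma q)) z < 0) :
    StrictMonoOn
      (fun x =>
        (deriv (deriv (qDigamma q)) (θ + x)
          - deriv (deriv (qDigamma q)) (θ + Real.log ν / Real.log q)) /
        (deriv (qDigamma q) (θ + x)
          - deriv (qDigamma q) (θ + Real.log ν / Real.log q)))
      (Set.Ioo (0 : ℝ) (Real.log ν / Real.log q)) := by
  have hlq : Real.log q < 0 := Real.log_neg hq0 hq1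
  have hlν : Real.log ν < 0 := Real.log_neg hν0 (hνμ.trans hμ1)
  have hL0 : 0 < Real.log ν / Real.log q := div_pos_of_neg_of_neg hlν hlq
  set Ψ₁ := deriv (qDigamma q) with hΨ₁
  set Ψ₂ := deriv (deriv (qDigamma q)) with hΨ₂
  set Ψ₃ := deriv (deriv (deriv (qDigamma q))) with hΨ₃
  set B : ℝ := θ + Real.log ν / Real.log q with hBdef
  have hBpos : 0 < B := by rw [hBdef]; linarith
  -- Cauchy mean value theorem for the pair (Ψ₂, Ψ₁)
  have mvt : ∀ a b : ℝ, 0 < a → a < b → ∃ c ∈ Set.Ioo a b,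
      (Ψ₁ b - Ψ₁ a) * Ψ₃ c = (Ψ₂ b - Ψ₂ a) * Ψ₂ c := by
    intro a b ha hab
    have hsub : Set.Icc a b ⊆ Set.Ioi (0:ℝ) := fun w hw => lt_of_lt_of_le ha hw.1
    have hsub' : Set.Ioo a b ⊆ Set.Ioi (0:ℝ) := fun w hw => lt_trans ha hw.1
    exact exists_ratio_hasDerivAt_eq_ratio_slope Ψ₂ Ψ₃ hab
      (fun w hw => ((hasDerivAt_psi2 hq0 hq1 (hsub hw)).continuousAt).continuousWithinAt)
      (fun w hw => by
        have h := hasDerivAt_psi2 hq0 hq1 (hsub' hw)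
        rwa [← psi3_eq hq0 hq1 (hsub' hw)] at h)
      Ψ₁ Ψ₂
      (fun w hw => ((hasDerivAt_psi1 hq0 hq1 (hsub hw)).continuousAt).continuousWithinAt)
      (fun w hw => by
        have h := hasDerivAt_psi1 hq0 hq1 (hsub' hw)
        rwa [← psi2_eq hq0 hq1 (hsub' hw)] at h)
  intro x hx y hy hxy
  obtain ⟨hx0, hxL⟩ := hx
  obtain ⟨hy0, hyL⟩ := hy
  have hux : (0:ℝ) < θ + x := by linarith
  have huy : (0:ℝ) < θ + y := by linarith
  have hxy' : θ + x < θ + y := by linarith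
  have hyB : θ + y < B := by rw [hBdef]; linarith
  have hxB : θ + x < B := by linarith
  obtain ⟨c1, hc1, e1⟩ := mvt (θ + x) (θ + y) hux hxy'
  obtain ⟨c2, hc2, e2⟩ := mvt (θ + y) B huy hyB
  have hc1pos : (0:ℝ) < c1 := lt_trans hux hc1.1
  have hc2pos : (0:ℝ) < c2 := lt_trans huy hc2.1
  have hc12 : c1 < c2 := lt_trans hc1.2 hc2.1
  have hΨ₂c1 : Ψ₂ c1 ≠ 0 := (hneg c1 hc1pos).ne
  have hΨ₂c2 : Ψ₂ c2 ≠ 0 := (hneg c2 hc2pos).ne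
  have hr : Ψ₃ c1 / Ψ₂ c1 < Ψ₃ c2 / Ψ₂ c2 :=
    ratio_strictMono hq0 hq1 hc1pos hc2pos hc12
  -- a-values
  have hA1 : 0 < Ψ₁ (θ + x) - Ψ₁ B := sub_pos.2 (hanti hux hBpos hxB)
  have hA2 : 0 < Ψ₁ (θ + y) - Ψ₁ B := sub_pos.2 (hanti huy hBpos hyB)
  have hA12 : Ψ₁ (θ + y) - Ψ₁ B < Ψ₁ (θ + x) - Ψ₁ B := by
    have := hanti hux huy hxy'
    linarith
  -- rewrite the MVT conclusions as equalities with ratios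
  set r1 : ℝ := Ψ₃ c1 / Ψ₂ c1 with hr1
  set r2 : ℝ := Ψ₃ c2 / Ψ₂ c2 with hr2
  have e1' : Ψ₂ (θ + y) - Ψ₂ (θ + x) = r1 * (Ψ₁ (θ + y) - Ψ₁ (θ + x)) := by
    rw [hr1, div_mul_eq_mul_div, eq_div_iff hΨ₂c1]
    linear_combination -e1
  have e2' : Ψ₂ B - Ψ₂ (θ + y) = r2 * (Ψ₁ B - Ψ₁ (θ + y)) := by
    rw [hr2, div_mul_eq_mul_div, eq_div_iff hΨ₂c2]
    linear_combination -e2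
  simp only [Set.mem_Ioo] at *
  rw [div_lt_div_iff₀ (by linarith : 0 < Ψ₁ (θ + x) - Ψ₁ B)
    (by linarith : 0 < Ψ₁ (θ + y) - Ψ₁ B)]
  nlinarith [mul_pos (mul_pos (sub_pos.2 hr)
    (sub_pos.2 hA12)) hA2]
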